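/- Let 0 < r₁ < r₃ < r₂ and λ₁ = -r₃. With L, C₃ as above satisfying 0 < C₃ < L√(r₂-r₃) + C₃ ≤ π/2, the function φ defined by φ(y) = exp(L√(r₃-r₁)·y) for y ≤ 0, φ(y) = sin(L√(r₂-r₃)·y + C₃)/sin(C₃) for 0 < y < 1, and φ(y) = C₄·L·(y-1) + C₅ for y ≥ 1, where C₄ = √(r₂-r₃)·cos(L√(r₂-r₃)+C₃)/sin(C₃) and C₅ = sin(L√(r₂-r₃)+C₃)/sin(C₃), is positive on ℝ, continuously differentiable, and satisfies -φ''(y)/L² - m(y)φ(y) = -r₃·φ(y) on each of the three open regions y < 0, 0 < y < 1, y > 1, where m(y) = r₁ for y < 0, r₂ for 0 ≤ y < 1, r₃ for y ≥ 1. -/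

import Mathlib

set_option maxHeartbeats 1000000


open Real

theorem eigenfunction_case2 (r₁ r₂ r₃ L C₃ : ℝ)
    (h1 : 0 < r₁) (h13 : r₁ < r₃) (h32 : r₃ < r₂) (hL : 0 < L)
    (hC₃ : 0 < C₃) (hsum : C₃ < L * Real.sqrt (r₂ - r₃) + C₃)
    (hle : L * Real.sqrt (r₂ - r₃) + C₃ ≤ Real.pi / 2)
    (hcot : Real.cot C₃ = Real.sqrt ((r₃ - r₁) / (r₂ - r₃)))
    (C₄ C₅ : ℝ)
    (hC₄ : C₄ = Real.sqrt (r₂ - r₃) * Real.cos (L * Real.sqrt (r₂ - r₃) + C₃) / Real.sin C₃)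
    (hC₅ : C₅ = Real.sin (L * Real.sqrt (r₂ - r₃) + C₃) / Real.sin C₃)
    (φ m : ℝ → ℝ)
    (hφ : ∀ y, φ y = if y ≤ 0 then Real.exp (L * Real.sqrt (r₃ - r₁) * y)
        else if y < 1 then Real.sin (L * Real.sqrt (r₂ - r₃) * y + C₃) / Real.sin C₃
        else C₄ * L * (y - 1) + C₅)
    (hm : ∀ y, m y = if y < 0 then r₁ else if y < 1 then r₂ else r₃) :
    (∀ y, 0 < φ y) ∧ ContDiff ℝ 1 φ ∧
      (∀ y, y < 0 →
        -(deriv (deriv φ) y) / L ^ 2 - m y * φ y = -r₃ * φ y) ∧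
      (∀ y, 0 < y → y < 1 →
        -(deriv (deriv φ) y) / L ^ 2 - m y * φ y = -r₃ * φ y) ∧
      (∀ y, 1 < y →
        -(deriv (deriv φ) y) / L ^ 2 - m y * φ y = -r₃ * φ y) := by
  have hpi := Real.pi_pos
  set a : ℝ := L * Real.sqrt (r₃ - r₁) with ha_def
  set b : ℝ := L * Real.sqrt (r₂ - r₃) with hb_def
  have hsa : 0 < Real.sqrt (r₃ - r₁) := Real.sqrt_pos.2 (by linarith)
  have hsb : 0 < Real.sqrt (r₂ - r₃) := Real.sqrt_pos.2 (by linarith)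
  have ha : 0 < a := mul_pos hL hsa
  have hb : 0 < b := mul_pos hL hsb
  have hsinC : 0 < Real.sin C₃ :=
    Real.sin_pos_of_pos_of_lt_pi hC₃ (by linarith)
  have hsinbC : 0 < Real.sin (b + C₃) :=
    Real.sin_pos_of_pos_of_lt_pi (by linarith) (by linarith)
  have hcosbC : 0 ≤ Real.cos (b + C₃) :=
    Real.cos_nonneg_of_mem_Icc ⟨by linarith, hle⟩
  have hkey : a * Real.sin C₃ = b * Real.cos C₃ := by
    have h1 : Real.cos C₃ / Real.sin C₃ = Real.sqrt (r₃ - r₁) / Real.sqrt (r₂ - r₃) := by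
      rw [← Real.cot_eq_cos_div_sin, hcot, Real.sqrt_div (by linarith)]
    have h2 : Real.sqrt (r₃ - r₁) * Real.sin C₃ = Real.sqrt (r₂ - r₃) * Real.cos C₃ := by
      field_simp at h1
      linarith
    rw [ha_def, hb_def]
    linear_combination L * h2
  have haa : a * a = L ^ 2 * (r₃ - r₁) := by
    have := Real.mul_self_sqrt (show (0:ℝ) ≤ r₃ - r₁ by linarith)
    rw [ha_def]; linear_combination L ^ 2 * this
  have hbb : b * b = L ^ 2 * (r₂ - r₃) := by
    have := Real.mul_self_sqrt (show (0:ℝ) ≤ r₂ - r₃ by linarith)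
    rw [hb_def]; linear_combination L ^ 2 * this
  have hC4L : C₄ * L = b * Real.cos (b + C₃) / Real.sin C₃ := by
    rw [hC₄, hb_def]; ring
  have haeq : Real.cos C₃ * b / Real.sin C₃ = a := by
    field_simp
    linarith [hkey]
  -- the derivative function
  obtain ⟨ψ, hψdef⟩ : ∃ ψ : ℝ → ℝ, ψ = fun y =>
      if y ≤ 0 then a * Real.exp (a * y)
      else if y < 1 then b * Real.cos (b * y + C₃) / Real.sin C₃
      else C₄ * L := ⟨_, rfl⟩
  have hψ' : ∀ y, ψ y = if y ≤ 0 then a * Real.exp (a * y)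
      else if y < 1 then b * Real.cos (b * y + C₃) / Real.sin C₃
      else C₄ * L := fun y => by rw [hψdef]
  -- branch derivatives
  have hE : ∀ y : ℝ, HasDerivAt (fun t => Real.exp (a * t)) (Real.exp (a * y) * a) y := by
    intro y
    have h1 : HasDerivAt (fun t : ℝ => a * t) a y := by
      simpa using (hasDerivAt_id y).const_mul a
    exact h1.exp
  have hlin : ∀ y : ℝ, HasDerivAt (fun t : ℝ => b * t + C₃) b y := by
    intro y
    have h1 : HasDerivAt (fun t : ℝ => b * t) b y := by
      simpa using (hasDerivAt_id y).const_mul b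
    exact h1.add_const C₃
  have hS : ∀ y : ℝ, HasDerivAt (fun t => Real.sin (b * t + C₃) / Real.sin C₃)
      (Real.cos (b * y + C₃) * b / Real.sin C₃) y := fun y =>
    ((hlin y).sin).div_const _
  have hP : ∀ y : ℝ, HasDerivAt (fun t : ℝ => C₄ * L * (t - 1) + C₅) (C₄ * L) y := by
    intro y
    simpa using (((hasDerivAt_id y).sub_const 1).const_mul (C₄ * L)).add_const C₅
  -- φ has derivative ψ everywhere
  have hderiv : ∀ y, HasDerivAt φ (ψ y) y := by
    intro y
    rcases lt_trichotomy y 0 with hy | hy | hy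
    · have heq : φ =ᶠ[nhds y] fun t => Real.exp (a * t) := by
        filter_upwards [Iio_mem_nhds hy] with t ht
        rw [hφ t, if_pos (le_of_lt ht)]
      have := (hE y).congr_of_eventuallyEq heq
      rw [hψ' y, if_pos hy.le]
      simpa [mul_comm] using this
    · subst hy
      have hleft : HasDerivWithinAt φ a (Set.Iic 0) 0 := by
        have h0 : HasDerivWithinAt (fun t => Real.exp (a * t)) a (Set.Iic 0) 0 := by
          simpa using (hE 0).hasDerivWithinAt
        exact h0.congr (fun t ht => by rw [hφ t, if_pos (Set.mem_Iic.mp ht)]) (by rw [hφ 0, if_pos le_rfl])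
      have hright : HasDerivWithinAt φ a (Set.Ici 0) 0 := by
        have h0 : HasDerivWithinAt (fun t => Real.sin (b * t + C₃) / Real.sin C₃) a
            (Set.Ici 0) 0 := by
          have := (hS 0).hasDerivWithinAt (s := Set.Ici 0)
          simpa [haeq] using this
        refine h0.congr_of_eventuallyEq ?_ ?_
        · filter_upwards [self_mem_nhdsWithin,
            mem_nhdsWithin_of_mem_nhds (Iio_mem_nhds (by norm_num : (0:ℝ) < 1))] with t ht0 ht1
          rcases eq_or_lt_of_le (show (0:ℝ) ≤ t from ht0) with h | h
          · rw [hφ t, ← h]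
            simp [div_self hsinC.ne']
          · rw [hφ t, if_neg (not_le.2 h), if_pos (Set.mem_Iio.mp ht1)]
        · rw [hφ 0, if_pos le_rfl]
          simp [div_self hsinC.ne']
      have := hleft.union hright
      rw [Set.Iic_union_Ici] at this
      have h2 := this.hasDerivAt (by simp)
      rw [hψ' 0, if_pos le_rfl]
      simpa using h2
    · rcases lt_trichotomy y 1 with hy1 | hy1 | hy1
      · have heq : φ =ᶠ[nhds y] fun t => Real.sin (b * t + C₃) / Real.sin C₃ := by
          filter_upwards [Ioo_mem_nhds hy hy1] with t ht
          rw [hφ t, if_neg (not_le.2 ht.1), if_pos ht.2]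
        have := (hS y).congr_of_eventuallyEq heq
        rw [hψ' y, if_neg (not_le.2 hy), if_pos hy1]
        simpa [mul_comm] using this
      · subst hy1
        have hleft : HasDerivWithinAt φ (C₄ * L) (Set.Iic 1) 1 := by
          have h0 : HasDerivWithinAt (fun t => Real.sin (b * t + C₃) / Real.sin C₃) (C₄ * L)
              (Set.Iic 1) 1 := by
            have := (hS 1).hasDerivWithinAt (s := Set.Iic 1)
            have hval : Real.cos (b * 1 + C₃) * b / Real.sin C₃ = C₄ * L := by
              rw [hC4L]; ring_nf
            rwa [hval] at this
          refine h0.congr_of_eventuallyEq ?_ ?_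
          · filter_upwards [self_mem_nhdsWithin,
              mem_nhdsWithin_of_mem_nhds (Ioi_mem_nhds (by norm_num : (0:ℝ) < 1))] with t ht1 ht0
            rcases eq_or_lt_of_le (show t ≤ (1:ℝ) from ht1) with h | h
            · rw [hφ t, if_neg (by rw[h]; norm_num), if_neg (by rw [h]; norm_num), h]
              rw [hC₅]
              simp
            · rw [hφ t, if_neg (not_le.2 ht0), if_pos h]
          · rw [hφ 1, if_neg (by norm_num), if_neg (by norm_num), hC₅]
            simp
        have hright : HasDerivWithinAt φ (C₄ * L) (Set.Ici 1) 1 := by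
          have h0 : HasDerivWithinAt (fun t : ℝ => C₄ * L * (t - 1) + C₅) (C₄ * L)
              (Set.Ici 1) 1 := (hP 1).hasDerivWithinAt
          refine h0.congr (fun t ht => ?_) ?_
          · rw [hφ t, if_neg (by simp at ht; linarith), if_neg (by simp at ht; linarith)]
          · rw [hφ 1, if_neg (by norm_num), if_neg (by norm_num)]
        have := hleft.union hright
        rw [Set.Iic_union_Ici] at this
        have h2 := this.hasDerivAt (by simp)
        rw [hψ' 1, if_neg (by norm_num), if_neg (by norm_num)]
        exact h2
      · have heq : φ =ᶠ[nhds y] fun t : ℝ => C₄ * L * (t - 1) + C₅ := by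
          filter_upwards [Ioi_mem_nhds hy1] with t ht
          have ht' : (1:ℝ) < t := ht
          rw [hφ t, if_neg (by linarith), if_neg (by linarith)]
        have := (hP y).congr_of_eventuallyEq heq
        rw [hψ' y, if_neg (by linarith), if_neg (not_lt.2 hy1.le)]
        exact this
  have hderivφ : deriv φ = ψ := funext fun t => (hderiv t).deriv
  refine ⟨?_, ?_, ?_, ?_, ?_⟩
  · -- positivity
    intro y
    rw [hφ y]
    split_ifs with h1' h2'
    · exact Real.exp_pos _
    · push_neg at h1'
      apply div_pos _ hsinC
      apply Real.sin_pos_of_pos_of_lt_pi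
      · nlinarith
      · nlinarith
    · push_neg at h1' h2'
      have hC4 : 0 ≤ C₄ := by
        rw [hC₄]
        exact div_nonneg (mul_nonneg hsb.le hcosbC) hsinC.le
      have hC5 : 0 < C₅ := by
        rw [hC₅]; exact div_pos hsinbC hsinC
      have := mul_nonneg (mul_nonneg hC4 hL.le) (sub_nonneg.2 h2')
      linarith
  · -- C1 smoothness
    rw [contDiff_one_iff_deriv]
    refine ⟨fun y => (hderiv y).differentiableAt, ?_⟩
    rw [hderivφ]
    have hψ2 : ψ = fun y => if y ≤ 0 then a * Real.exp (a * y)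
        else if 1 ≤ y then C₄ * L else b * Real.cos (b * y + C₃) / Real.sin C₃ := by
      funext y
      rw [hψ']
      split_ifs with h1' h2' h3' <;> first | rfl | linarith
    rw [hψ2]
    have hScont : Continuous fun y : ℝ => b * Real.cos (b * y + C₃) / Real.sin C₃ := by
      fun_prop
    have hinner : Continuous fun y : ℝ =>
        if 1 ≤ y then C₄ * L else b * Real.cos (b * y + C₃) / Real.sin C₃ := by
      apply Continuous.if_le continuous_const hScont continuous_const continuous_id
      intro x hx
      have hx' : x = 1 := by simpa using hx.symm
      subst hx'
      rw [mul_one, hC4L]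
    apply Continuous.if_le (by fun_prop) hinner continuous_id continuous_const
    intro x hx
    have hx' : x = 0 := hx
    subst hx'
    have : (if (1:ℝ) ≤ (0:ℝ) then C₄ * L else b * Real.cos (b * 0 + C₃) / Real.sin C₃)
        = b * Real.cos (b * 0 + C₃) / Real.sin C₃ := by norm_num
    rw [this]
    simp only [mul_zero, zero_add, Real.exp_zero, mul_one]
    rw [← haeq]; ring
  · -- region y < 0
    intro y hy
    have hD2 : HasDerivAt ψ (a * (Real.exp (a * y) * a)) y := by
      have heq : ψ =ᶠ[nhds y] fun t => a * Real.exp (a * t) := by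
        filter_upwards [Iio_mem_nhds hy] with t ht
        rw [hψ' t, if_pos ht.le]
      exact ((hE y).const_mul a).congr_of_eventuallyEq heq
    rw [hderivφ, hD2.deriv, hφ y, if_pos hy.le, hm y, if_pos hy]
    have hnum : a * (Real.exp (a * y) * a) = L ^ 2 * ((r₃ - r₁) * Real.exp (a * y)) := by
      linear_combination (Real.exp (a * y)) * haa
    rw [hnum, neg_div, mul_div_cancel_left₀ _ (pow_ne_zero 2 hL.ne')]
    ring
  · -- region 0 < y < 1
    intro y hy0 hy1
    have hD2 : HasDerivAt ψ (-Real.sin (b * y + C₃) * b * b / Real.sin C₃) y := by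
      have heq : ψ =ᶠ[nhds y] fun t => b * Real.cos (b * t + C₃) / Real.sin C₃ := by
        filter_upwards [Ioo_mem_nhds hy0 hy1] with t ht
        rw [hψ' t, if_neg (not_le.2 ht.1), if_pos ht.2]
      have h0 : HasDerivAt (fun t => b * Real.cos (b * t + C₃) / Real.sin C₃)
          (b * (-Real.sin (b * y + C₃) * b) / Real.sin C₃) y :=
        (((hlin y).cos).const_mul b).div_const _
      have := h0.congr_of_eventuallyEq heq
      have e : -Real.sin (b * y + C₃) * b * b / Real.sin C₃
          = b * (-Real.sin (b * y + C₃) * b) / Real.sin C₃ := by ring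
      rw [e]; exact this
    rw [hderivφ, hD2.deriv, hφ y, if_neg (not_le.2 hy0), if_pos hy1, hm y,
      if_neg (not_lt.2 hy0.le), if_pos hy1]
    have hnum : -Real.sin (b * y + C₃) * b * b / Real.sin C₃
        = L ^ 2 * (-(r₂ - r₃) * (Real.sin (b * y + C₃) / Real.sin C₃)) := by
      linear_combination (-(Real.sin (b * y + C₃)) / Real.sin C₃) * hbb
    rw [hnum, neg_div, mul_div_cancel_left₀ _ (pow_ne_zero 2 hL.ne')]
    ring
  · -- region 1 < y
    intro y hy
    have hD2 : HasDerivAt ψ 0 y := by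
      have heq : ψ =ᶠ[nhds y] fun _ : ℝ => C₄ * L := by
        filter_upwards [Ioi_mem_nhds hy] with t ht
        have ht' : (1:ℝ) < t := ht
        rw [hψ' t, if_neg (by linarith), if_neg (not_lt.2 ht'.le)]
      exact (hasDerivAt_const y (C₄ * L)).congr_of_eventuallyEq heq
    rw [hderivφ, hD2.deriv, hφ y, if_neg (by linarith), if_neg (not_lt.2 hy.le), hm y,
      if_neg (by linarith), if_neg (not_lt.2 hy.le)]
    ring
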